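/- Fix an integer j ≥ 2, a real number s < −j + 1/2, and a time t > 0. Then there is no constant C > 0 such that ‖A₃(u₀)(t)‖_{Ḣ^s} ≤ C·‖u₀‖³_{Ḣ^s} holds for every zero-mean 2π-periodic trigonometric polynomial u₀. Consequently the solution map of the periodic higher-order KdV equation cannot be three times continuously differentiable at the origin from H^s(0,2π) to C([0,T]; H^s(0,2π)). -/

import Mathlib

open MeasureTheory
open scoped ENNReal

noncomputable section

/-- Dispersion `P(k) = (−1)^{j+1} k^{2j+1}` of the higher-order KdV equation. -/
def disp (j : ℕ) (k : ℤ) : ℝ := (-1 : ℝ) ^ (j + 1) * (k : ℝ) ^ (2 * j + 1)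

/-- Fourier coefficients of the free evolution `u₁(t) = S(t)u₀`, where `a` is the
(zero-mean) sequence of Fourier coefficients of `u₀`. -/
def c1 (j : ℕ) (a : ℤ → ℂ) (k : ℤ) (t : ℝ) : ℂ :=
  Complex.exp (Complex.I * (disp j k : ℝ) * (t : ℝ)) * a k

/-- Fourier coefficients of the Duhamel term `∫₀ᵗ S(t−s)∂_x(u v) ds`, computed
coefficientwise: the `k`-th coefficient of `∂_x(uv)(s)` is `i k Σ_{k₁} c(k₁,s) d(k−k₁,s)`. -/
def duh (j : ℕ) (c d : ℤ → ℝ → ℂ) (k : ℤ) (t : ℝ) : ℂ :=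
  ∫ s in (0 : ℝ)..t, Complex.exp (Complex.I * (disp j k : ℝ) * ((t - s : ℝ))) *
    (Complex.I * (k : ℂ) * ∑' k₁ : ℤ, c k₁ s * d (k - k₁) s)

/-- Fourier coefficients of the second Picard iterate
`A₂(u₀)(t) = ∫₀ᵗ S(t−s)∂_x[(u₁(s))²] ds`. -/
def A2 (j : ℕ) (a : ℤ → ℂ) (k : ℤ) (t : ℝ) : ℂ := duh j (c1 j a) (c1 j a) k t

/-- Fourier coefficients of the third Picard iterate
`A₃(u₀)(t) = 2∫₀ᵗ S(t−s)∂_x[u₁(s)·A₂(u₀)(s)] ds`. -/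
def A3 (j : ℕ) (a : ℤ → ℂ) (k : ℤ) (t : ℝ) : ℂ := 2 * duh j (c1 j a) (A2 j a) k t

/-- Homogeneous Sobolev norm `‖v‖_{Ḣ^s} = (Σ_{k≠0}|k|^{2s}|v̂(k)|²)^{1/2}`. -/
def HdotS (s : ℝ) (v : ℤ → ℂ) : ℝ≥0∞ :=
  (∑' k : ℤ, if k = 0 then 0 else
    ENNReal.ofReal (|(k : ℝ)| ^ (2 * s)) * (‖v k‖₊ : ℝ≥0∞) ^ 2) ^ (1 / 2 : ℝ)

/-- Fourier coefficients of `φ_N(x) = N^{−s}(e^{iNx} + e^{−iNx})`. -/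
def phi (s : ℝ) (N : ℕ) : ℤ → ℂ :=
  fun k => if k = (N : ℤ) ∨ k = -(N : ℤ) then (((N : ℝ) ^ (-s) : ℝ) : ℂ) else 0

lemma phi_eq_zero {s : ℝ} {N : ℕ} {k : ℤ} (h1 : k ≠ (N:ℤ)) (h2 : k ≠ -(N:ℤ)) : phi s N k = 0 := by
  simp [phi, h1, h2]

lemma c1_eq_zero {j : ℕ} {s : ℝ} {N : ℕ} {k : ℤ} (h1 : k ≠ (N:ℤ)) (h2 : k ≠ -(N:ℤ)) (σ : ℝ) :
    c1 j (phi s N) k σ = 0 := by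
  simp [c1, phi_eq_zero h1 h2]

lemma c1_N {j : ℕ} {s : ℝ} {N : ℕ} (σ : ℝ) :
    c1 j (phi s N) N σ = Complex.exp (Complex.I * (disp j N : ℝ) * σ) * (((N:ℝ)^(-s) : ℝ):ℂ) := by
  simp [c1, phi]

lemma tsum_A2 {j : ℕ} {s : ℝ} {N : ℕ} (hN : 1 ≤ N) (σ : ℝ) :
    (∑' k₁ : ℤ, c1 j (phi s N) k₁ σ * c1 j (phi s N) (2*(N:ℤ) - k₁) σ)
      = c1 j (phi s N) N σ * c1 j (phi s N) N σ := by
  rw [tsum_eq_single (N:ℤ)]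
  · rw [show 2*(N:ℤ) - N = N by ring]
  · intro b hb
    by_cases h1 : b = -(N:ℤ)
    · subst h1
      rw [c1_eq_zero (k := 2*(N:ℤ) - -(N:ℤ)) (by omega) (by omega), mul_zero]
    · rw [c1_eq_zero hb h1, zero_mul]

lemma A2_2N (j : ℕ) (s : ℝ) (N : ℕ) (hN : 1 ≤ N)
    (hβ : 2 * disp j N - disp j (2*(N:ℤ)) ≠ 0) (σ : ℝ) :
    A2 j (phi s N) (2*(N:ℤ)) σ =
      ((2*(N:ℝ)*((N:ℝ)^(-s))^2/(2 * disp j N - disp j (2*(N:ℤ))) : ℝ) : ℂ) *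
        (Complex.exp (Complex.I * (2 * disp j N : ℝ) * σ)
          - Complex.exp (Complex.I * (disp j (2*(N:ℤ)) : ℝ) * σ)) := by
  set ω := disp j N with hω
  set W := disp j (2*(N:ℤ)) with hW
  set A : ℝ := (N:ℝ)^(-s) with hA
  set β : ℝ := 2*ω - W with hβ'
  unfold A2 duh
  have hpt : ∀ τ : ℝ, Complex.exp (Complex.I * (W : ℝ) * ((σ - τ : ℝ))) *
      (Complex.I * ((2*(N:ℤ) : ℤ) : ℂ) *
        (Complex.exp (Complex.I * (ω : ℝ) * τ) * ((A:ℝ):ℂ) *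
          (Complex.exp (Complex.I * (ω : ℝ) * τ) * ((A:ℝ):ℂ)))) =
      (Complex.I * (2*(N:ℝ)) * ((A:ℝ):ℂ)^2 * Complex.exp (Complex.I * (W:ℝ) * σ)) *
        Complex.exp ((Complex.I * (β:ℝ)) * τ) := by
    intro τ
    have e1 : Complex.exp (Complex.I * (W : ℝ) * ((σ - τ : ℝ))) *
        (Complex.exp (Complex.I * (ω : ℝ) * τ) * Complex.exp (Complex.I * (ω : ℝ) * τ)) =
        Complex.exp (Complex.I * (W:ℝ) * σ) * Complex.exp ((Complex.I * (β:ℝ)) * τ) := by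
      rw [← Complex.exp_add, ← Complex.exp_add, ← Complex.exp_add]
      congr 1
      rw [hβ']
      push_cast
      ring
    push_cast at e1 ⊢
    linear_combination (Complex.I * (2*(N:ℂ)) * ((A:ℝ):ℂ)^2) * e1
  simp only [tsum_A2 hN, c1_N]
  simp only [← hω, ← hW, ← hA, ← hβ', hpt]
  rw [intervalIntegral.integral_const_mul, integral_exp_mul_complex (by
    simp [Complex.ext_iff, hβ'] at *
    exact hβ)]
  have hIβ : (Complex.I * (β:ℝ)) ≠ 0 := by
    simp [Complex.ext_iff]
    simpa [hβ'] using hβ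
  have hβC : ((β:ℝ):ℂ) ≠ 0 := Complex.ofReal_ne_zero.mpr (by simpa [hβ'] using hβ)
  have e2 : Complex.exp (Complex.I * ((2*ω : ℝ):ℂ) * σ) =
      Complex.exp (Complex.I * (W:ℝ) * σ) * Complex.exp ((Complex.I * (β:ℝ)) * σ) := by
    rw [← Complex.exp_add]
    congr 1
    rw [hβ']
    push_cast
    ring
  rw [e2]
  push_cast
  rw [mul_zero, Complex.exp_zero]
  field_simp

lemma disp_neg (j : ℕ) (k : ℤ) : disp j (-k) = - disp j k := by
  unfold disp
  have h1 : ((-k:ℤ):ℝ) = -(k:ℝ) := by push_cast; ring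
  have h2 : Odd (2*j+1) := ⟨j, by omega⟩
  rw [h1, h2.neg_pow]
  ring

lemma c1_negN {j : ℕ} {s : ℝ} {N : ℕ} (σ : ℝ) :
    c1 j (phi s N) (-(N:ℤ)) σ
      = Complex.exp (-(Complex.I * (disp j N : ℝ) * σ)) * (((N:ℝ)^(-s) : ℝ):ℂ) := by
  simp [c1, phi, disp_neg]

lemma A2_zero (j : ℕ) (a : ℤ → ℂ) (t : ℝ) : A2 j a 0 t = 0 := by
  simp [A2, duh]

lemma tsum_A3 {j : ℕ} {s : ℝ} {N : ℕ} (hN : 1 ≤ N) (σ : ℝ) :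
    (∑' k₁ : ℤ, c1 j (phi s N) k₁ σ * A2 j (phi s N) ((N:ℤ) - k₁) σ)
      = c1 j (phi s N) (-(N:ℤ)) σ * A2 j (phi s N) (2*(N:ℤ)) σ := by
  rw [tsum_eq_single (-(N:ℤ))]
  · rw [show (N:ℤ) - -(N:ℤ) = 2*(N:ℤ) by ring]
  · intro b hb
    by_cases h1 : b = (N:ℤ)
    · subst h1
      rw [sub_self, A2_zero, mul_zero]
    · rw [c1_eq_zero h1 hb, zero_mul]

lemma A3_N (j : ℕ) (s : ℝ) (N : ℕ) (hN : 1 ≤ N)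
    (hβ : 2 * disp j N - disp j (2*(N:ℤ)) ≠ 0) (t : ℝ) :
    A3 j (phi s N) N t =
      2 * (Complex.I * (N:ℂ) * (((N:ℝ)^(-s) : ℝ):ℂ) *
          ((2*(N:ℝ)*((N:ℝ)^(-s))^2/(2 * disp j N - disp j (2*(N:ℤ))) : ℝ) : ℂ) *
          Complex.exp (Complex.I * (disp j N : ℝ) * t)) *
        ((t:ℂ) - (Complex.exp ((Complex.I * (-(2 * disp j N - disp j (2*(N:ℤ))) : ℝ)) * t) - 1)
            / (Complex.I * (-(2 * disp j N - disp j (2*(N:ℤ))) : ℝ))) := by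
  set ω := disp j N with hω
  set W := disp j (2*(N:ℤ)) with hW
  set A : ℝ := (N:ℝ)^(-s) with hA
  set β : ℝ := 2*ω - W with hβ'
  have hIβ : (Complex.I * ((-β : ℝ):ℂ)) ≠ 0 := by
    simp [Complex.ext_iff]
    simpa [hβ'] using hβ
  unfold A3 duh
  simp only [tsum_A3 hN, c1_negN, A2_2N j s N hN hβ]
  have hpt : ∀ σ : ℝ, Complex.exp (Complex.I * (ω : ℝ) * ((t - σ : ℝ))) *
      (Complex.I * ((N : ℤ) : ℂ) *
        (Complex.exp (-(Complex.I * (ω : ℝ) * σ)) * ((A:ℝ):ℂ) *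
          (((2*(N:ℝ)*A^2/β : ℝ) : ℂ) *
            (Complex.exp (Complex.I * ((2*ω : ℝ):ℂ) * σ) - Complex.exp (Complex.I * (W:ℝ) * σ))))) =
      (Complex.I * (N:ℂ) * ((A:ℝ):ℂ) * (((2*(N:ℝ)*A^2/β : ℝ)):ℂ) * Complex.exp (Complex.I * (ω:ℝ) * t))
        - (Complex.I * (N:ℂ) * ((A:ℝ):ℂ) * (((2*(N:ℝ)*A^2/β : ℝ)):ℂ) * Complex.exp (Complex.I * (ω:ℝ) * t))
          * Complex.exp ((Complex.I * ((-β : ℝ):ℂ)) * σ) := by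
    intro σ
    have e1 : Complex.exp (Complex.I * (ω : ℝ) * ((t - σ : ℝ))) *
        (Complex.exp (-(Complex.I * (ω : ℝ) * σ)) * Complex.exp (Complex.I * ((2*ω : ℝ):ℂ) * σ)) =
        Complex.exp (Complex.I * (ω:ℝ) * t) := by
      rw [← Complex.exp_add, ← Complex.exp_add]
      rw [show (Complex.I * ((ω : ℝ):ℂ) * (((t - σ : ℝ)):ℂ) +
          (-(Complex.I * ((ω : ℝ):ℂ) * (σ:ℂ)) + Complex.I * (((2*ω : ℝ):ℝ):ℂ) * (σ:ℂ)))
          = Complex.I * ((ω:ℝ):ℂ) * ((t:ℂ)) by push_cast; ring]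
    have e2 : Complex.exp (Complex.I * (ω : ℝ) * ((t - σ : ℝ))) *
        (Complex.exp (-(Complex.I * (ω : ℝ) * σ)) * Complex.exp (Complex.I * (W:ℝ) * σ)) =
        Complex.exp (Complex.I * (ω:ℝ) * t) * Complex.exp ((Complex.I * ((-β : ℝ):ℂ)) * σ) := by
      rw [← Complex.exp_add, ← Complex.exp_add, ← Complex.exp_add]
      congr 1
      rw [hβ']
      push_cast
      ring
    push_cast at e1 e2 ⊢
    linear_combination (Complex.I * (N:ℂ) * ((A:ℝ):ℂ) * (2*(N:ℂ)*((A:ℝ):ℂ)^2/((β:ℝ):ℂ))) * e1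
      - (Complex.I * (N:ℂ) * ((A:ℝ):ℂ) * (2*(N:ℂ)*((A:ℝ):ℂ)^2/((β:ℝ):ℂ))) * e2
  simp only [← hω, ← hW, ← hA, ← hβ', hpt]
  rw [intervalIntegral.integral_sub (by apply Continuous.intervalIntegrable; continuity)
      (by apply Continuous.intervalIntegrable; continuity),
    intervalIntegral.integral_const, intervalIntegral.integral_const_mul,
    integral_exp_mul_complex hIβ]
  simp only [Complex.ofReal_zero, mul_zero, Complex.exp_zero, sub_zero, smul_eq_mul, Complex.real_smul]
  push_cast
  ring

lemma A3_norm (j : ℕ) (s : ℝ) (N : ℕ) (hN : 1 ≤ N)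
    (hβ : 2 * disp j N - disp j (2*(N:ℤ)) ≠ 0) (t : ℝ) (ht : 0 ≤ t) :
    (4*(N:ℝ)^2*((N:ℝ)^(-s))^3/|2 * disp j N - disp j (2*(N:ℤ))|) *
      (t - 2/|2 * disp j N - disp j (2*(N:ℤ))|) ≤ ‖A3 j (phi s N) N t‖ := by
  rw [A3_N j s N hN hβ t]
  set ω := disp j N with hω
  set β : ℝ := 2 * disp j N - disp j (2*(N:ℤ)) with hβ'
  set A : ℝ := (N:ℝ)^(-s) with hA
  set B : ℝ := |β| with hB
  have hBpos : 0 < B := abs_pos.mpr hβ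
  have hA0 : 0 ≤ A := Real.rpow_nonneg (Nat.cast_nonneg N) _
  set q : ℂ := (Complex.exp ((Complex.I * ((-β : ℝ):ℂ)) * t) - 1) / (Complex.I * ((-β : ℝ):ℂ)) with hq
  have hqn : ‖q‖ ≤ 2 / B := by
    rw [hq, norm_div]
    have h1 : ‖Complex.exp ((Complex.I * ((-β : ℝ):ℂ)) * t) - 1‖ ≤ 2 := by
      refine le_trans (norm_sub_le _ _) ?_
      have h0 : ‖Complex.exp ((Complex.I * ((-β : ℝ):ℂ)) * t)‖ = 1 := by
        rw [show (Complex.I * ((-β : ℝ):ℂ)) * t = ((-β*t : ℝ):ℂ) * Complex.I by push_cast; ring]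
        simp [Complex.norm_exp]
      rw [h0, norm_one]
      norm_num
    have h2 : ‖Complex.I * ((-β : ℝ):ℂ)‖ = B := by
      simp [norm_mul, hB, abs_neg]
    rw [h2]
    gcongr
  have hDn : t - 2/B ≤ ‖(t:ℂ) - q‖ := by
    have h := norm_sub_norm_le ((t:ℂ)) q
    have ht' : ‖(t:ℂ)‖ = t := by
      simp [Complex.norm_real, _root_.abs_of_nonneg ht]
    rw [ht'] at h
    linarith
  have hnorm : ‖2 * (Complex.I * (N:ℂ) * ((A:ℝ):ℂ) * (((2*(N:ℝ)*A^2/β : ℝ)):ℂ) *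
      Complex.exp (Complex.I * (ω:ℝ) * t)) * ((t:ℂ) - q)‖
      = (4*(N:ℝ)^2*A^3/B) * ‖(t:ℂ) - q‖ := by
    have e1 : ‖Complex.exp (Complex.I * ((ω:ℝ):ℂ) * (t:ℂ))‖ = 1 := by
      rw [show Complex.I * ((ω:ℝ):ℂ) * (t:ℂ) = ((ω*t : ℝ):ℂ) * Complex.I by push_cast; ring]
      simp [Complex.norm_exp]
    simp only [norm_mul, Complex.norm_I, Complex.norm_real, Complex.norm_natCast,
      Complex.norm_ofNat, e1, Real.norm_eq_abs]
    rw [_root_.abs_of_nonneg hA0, abs_div,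
      _root_.abs_of_nonneg (by positivity : (0:ℝ) ≤ 2*(N:ℝ)*A^2), ← hB]
    ring
  rw [hnorm]
  have hc : 0 ≤ 4*(N:ℝ)^2*A^3/B := by positivity
  calc (4*(N:ℝ)^2*A^3/B) * (t - 2/B) ≤ (4*(N:ℝ)^2*A^3/B) * ‖(t:ℂ) - q‖ :=
        mul_le_mul_of_nonneg_left hDn hc
    _ = _ := rfl

lemma abs_disp (j : ℕ) (N : ℕ) : |disp j (N:ℤ)| = (N:ℝ) ^ (2*j+1) := by
  simp [disp, abs_mul, abs_pow]

lemma abs_beta (j N : ℕ) :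
    |2 * disp j N - disp j (2*(N:ℤ))| = (2^(2*j+1) - 2) * (N:ℝ)^(2*j+1) := by
  have h1 : disp j (2*(N:ℤ)) = 2^(2*j+1) * disp j N := by
    unfold disp
    push_cast
    ring
  have h2 : 2 * disp j (N:ℤ) - disp j (2*(N:ℤ)) = -((2^(2*j+1) - 2) * disp j N) := by
    rw [h1]; ring
  rw [h2, abs_neg, abs_mul, abs_disp]
  congr 1
  rw [_root_.abs_of_nonneg]
  have : (2:ℝ)^1 ≤ 2^(2*j+1) := pow_le_pow_right₀ (by norm_num) (by omega)
  simpa using this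

lemma beta_ne (j N : ℕ) (hj : 1 ≤ j) (hN : 1 ≤ N) :
    2 * disp j N - disp j (2*(N:ℤ)) ≠ 0 := by
  intro h
  have := abs_beta j N
  rw [h, abs_zero] at this
  have h1 : (0:ℝ) < (2^(2*j+1) - 2) * (N:ℝ)^(2*j+1) := by
    apply mul_pos
    · have : (2:ℝ)^1 < 2^(2*j+1) := pow_lt_pow_right₀ (by norm_num) (by omega)
      simpa using this
    · positivity
  linarith

lemma HdotS_lower (s : ℝ) (v : ℤ → ℂ) (N : ℕ) (hN : 1 ≤ N) :
    ENNReal.ofReal ((N:ℝ)^s * ‖v (N:ℤ)‖) ≤ HdotS s v := by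
  have hNpos : (0:ℝ) < (N:ℝ) := by exact_mod_cast hN
  have habs : |(((N:ℤ)):ℝ)| = (N:ℝ) := by
    push_cast
    exact _root_.abs_of_nonneg hNpos.le
  have key : ENNReal.ofReal ((N:ℝ)^s * ‖v (N:ℤ)‖) ^ (2:ℕ)
      = ENNReal.ofReal (|(((N:ℤ)):ℝ)| ^ (2*s)) * (‖v (N:ℤ)‖₊ : ℝ≥0∞) ^ 2 := by
    rw [ENNReal.ofReal_mul (Real.rpow_nonneg hNpos.le _), mul_pow,
      ofReal_norm, enorm_eq_nnnorm, habs]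
    congr 1
    rw [← ENNReal.ofReal_pow (Real.rpow_nonneg hNpos.le _)]
    congr 1
    rw [← Real.rpow_natCast ((N:ℝ)^s) 2, ← Real.rpow_mul hNpos.le]
    norm_num [mul_comm]
  have hle : ENNReal.ofReal ((N:ℝ)^s * ‖v (N:ℤ)‖) ^ (2:ℕ)
      ≤ ∑' k : ℤ, if k = 0 then 0 else
          ENNReal.ofReal (|(k : ℝ)| ^ (2 * s)) * (‖v k‖₊ : ℝ≥0∞) ^ 2 := by
    rw [key]
    refine le_trans ?_ (ENNReal.le_tsum (N:ℤ))
    rw [if_neg (by omega : ¬ ((N:ℤ) = 0))]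
  have h2 : ENNReal.ofReal ((N:ℝ)^s * ‖v (N:ℤ)‖)
      = (ENNReal.ofReal ((N:ℝ)^s * ‖v (N:ℤ)‖) ^ (2:ℕ)) ^ (1/2:ℝ) := by
    rw [← ENNReal.rpow_natCast, ← ENNReal.rpow_mul]
    norm_num
  exact h2.le.trans (ENNReal.rpow_le_rpow hle (by norm_num : (0:ℝ) ≤ 1/2))

lemma HdotS_phi (s : ℝ) (N : ℕ) (hN : 1 ≤ N) : HdotS s (phi s N) = (2:ℝ≥0∞) ^ (1/2 : ℝ) := by
  have hNpos : (0:ℝ) < (N:ℝ) := by exact_mod_cast hN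
  unfold HdotS
  congr 1
  have hterm : ∀ k : ℤ, k = (N:ℤ) ∨ k = -(N:ℤ) →
      (if k = 0 then 0 else ENNReal.ofReal (|(k : ℝ)| ^ (2 * s)) * (‖phi s N k‖₊ : ℝ≥0∞) ^ 2)
        = 1 := by
    intro k hk
    have hk0 : k ≠ 0 := by rcases hk with h | h <;> omega
    rw [if_neg hk0]
    have habs : |(k:ℝ)| = (N:ℝ) := by
      rcases hk with h | h <;> subst h <;> push_cast <;>
        simp [_root_.abs_of_nonneg hNpos.le]
    have hval : phi s N k = (((N:ℝ)^(-s) : ℝ):ℂ) := by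
      simp [phi, hk]
    rw [habs, hval]
    have h1 : (‖(((N:ℝ)^(-s) : ℝ):ℂ)‖₊ : ℝ≥0∞) = ENNReal.ofReal ((N:ℝ)^(-s)) := by
      rw [← enorm_eq_nnnorm, ← ofReal_norm, Complex.norm_real, Real.norm_eq_abs,
        _root_.abs_of_nonneg (Real.rpow_nonneg hNpos.le _)]
    rw [h1, ← ENNReal.ofReal_pow (Real.rpow_nonneg hNpos.le _),
      ← ENNReal.ofReal_mul (Real.rpow_nonneg hNpos.le _)]
    rw [← Real.rpow_natCast ((N:ℝ)^(-s)) 2, ← Real.rpow_mul hNpos.le,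
      ← Real.rpow_add hNpos]
    norm_num
    rw [show 2*s + -(s*2) = 0 from by ring, Real.rpow_zero]
  have hsupp : ∀ k : ℤ, k ∉ ({(N:ℤ), -(N:ℤ)} : Finset ℤ) →
      (if k = 0 then 0 else ENNReal.ofReal (|(k : ℝ)| ^ (2 * s)) * (‖phi s N k‖₊ : ℝ≥0∞) ^ 2)
        = 0 := by
    intro k hk
    simp only [Finset.mem_insert, Finset.mem_singleton] at hk
    push_neg at hk
    by_cases h0 : k = 0
    · simp [h0]
    · rw [if_neg h0, phi_eq_zero hk.1 hk.2]
      simp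
  rw [tsum_eq_sum hsupp, Finset.sum_insert (by simp; omega), Finset.sum_singleton,
    hterm _ (Or.inl rfl), hterm _ (Or.inr rfl)]
  norm_num

/-- **Theorem 1.2 (failure of the trilinear estimate):** for `s < −j + 1/2` and `t > 0`
there is no constant `C > 0` with `‖A₃(u₀)(t)‖_{Ḣ^s} ≤ C‖u₀‖³_{Ḣ^s}` for every zero-mean
`2π`-periodic trigonometric polynomial `u₀`; hence the solution map of the periodic
higher-order KdV equation is not `C³` at the origin from `H^s(0,2π)` to `C([0,T];H^s(0,2π))`. -/
theorem stmt_18 (j : ℕ) (hj : 2 ≤ j) (s t : ℝ) (hs : s < -(j : ℝ) + 1 / 2) (ht : 0 < t) :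
    ¬ ∃ C : ℝ, 0 < C ∧ ∀ a : ℤ → ℂ, a 0 = 0 → (Function.support a).Finite →
      HdotS s (fun k => A3 j a k t) ≤ ENNReal.ofReal C * HdotS s a ^ 3 := by
  rintro ⟨C, hC, h⟩
  set c : ℝ := 2^(2*j+1) - 2 with hc
  have hcpos : (0:ℝ) < c := by
    have h2 : (2:ℝ)^1 < 2^(2*j+1) := pow_lt_pow_right₀ (by norm_num) (by omega)
    simp only [pow_one] at h2
    simp only [hc]
    linarith
  have hc1 : (1:ℝ) ≤ c := by
    have h2 : (2:ℝ)^1 ≤ 2^(2*j) := pow_le_pow_right₀ (by norm_num) (by omega)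
    have h3 : (2:ℝ)^(2*j+1) = 2 * 2^(2*j) := by ring
    simp only [pow_one] at h2
    simp only [hc, h3]
    linarith
  have hε : 0 < 1 - 2*(j:ℝ) - 2*s := by linarith
  set ε := 1 - 2*(j:ℝ) - 2*s with hε'
  have htend : Filter.Tendsto (fun n:ℕ => (n:ℝ)^ε) Filter.atTop Filter.atTop :=
    (tendsto_rpow_atTop hε).comp tendsto_natCast_atTop_atTop
  obtain ⟨N, hN1, hN2⟩ := ((htend.eventually_ge_atTop ((8*C+1)*c/(2*t))).and
    (Filter.eventually_ge_atTop (max 1 (Nat.ceil (4/t))))).exists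
  simp only [ge_iff_le, max_le_iff] at hN2
  have hN : 1 ≤ N := hN2.1
  have hNpos : (0:ℝ) < (N:ℝ) := by exact_mod_cast hN
  have hN4 : 4/t ≤ (N:ℝ) := le_trans (Nat.le_ceil _) (by exact_mod_cast hN2.2)
  have hβne : 2 * disp j N - disp j (2*(N:ℤ)) ≠ 0 := beta_ne j N (by omega) hN
  set B : ℝ := |2 * disp j N - disp j (2*(N:ℤ))| with hBd
  have hBval : B = c * (N:ℝ)^(2*j+1) := by rw [hBd, abs_beta, hc]
  have hBpos : (0:ℝ) < B := abs_pos.mpr hβne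
  have hB4 : 4/t ≤ B := by
    have hNN : (N:ℝ) ≤ (N:ℝ)^(2*j+1) := le_self_pow₀ (by exact_mod_cast hN) (by omega)
    have : (N:ℝ)^(2*j+1) ≤ B := by
      rw [hBval]
      nlinarith [pow_pos hNpos (2*j+1)]
    linarith
  have hB2 : 2/B ≤ t/2 := by
    rw [div_le_div_iff₀ hBpos (by norm_num)]
    have h4 : 4 ≤ B * t := by
      rw [div_le_iff₀ ht] at hB4
      linarith
    linarith
  -- apply hypothesis
  have hzero : phi s N 0 = 0 := by
    simp only [phi]
    rw [if_neg (by omega)]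
  have hfin : (Function.support (phi s N)).Finite := by
    apply Set.Finite.subset ((Set.finite_singleton (-(N:ℤ))).insert ((N:ℤ)))
    intro k hk
    simp only [Set.mem_insert_iff, Set.mem_singleton_iff]
    by_contra hkk
    push_neg at hkk
    exact hk (phi_eq_zero hkk.1 hkk.2)
  have hmain := h (phi s N) hzero hfin
  have hup : HdotS s (phi s N) ^ 3 ≤ ENNReal.ofReal 8 := by
    rw [HdotS_phi s N hN]
    have h1 : (2:ℝ≥0∞) ^ (1/2:ℝ) ≤ 2 := by
      calc (2:ℝ≥0∞)^(1/2:ℝ) ≤ 2^(1:ℝ) :=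
            ENNReal.rpow_le_rpow_of_exponent_le (by norm_num) (by norm_num)
        _ = 2 := ENNReal.rpow_one 2
    calc ((2:ℝ≥0∞)^(1/2:ℝ))^3 ≤ 2^3 := pow_le_pow_left₀ zero_le h1 3
      _ = ENNReal.ofReal 8 := by
          rw [show ((8:ℝ)) = ((8:ℝ≥0∞)).toReal by norm_num]
          rw [ENNReal.ofReal_toReal (by norm_num)]
          norm_num
  have hfinal : ENNReal.ofReal ((N:ℝ)^s * ‖A3 j (phi s N) (N:ℤ) t‖) ≤ ENNReal.ofReal (C*8) := by
    refine le_trans (HdotS_lower s (fun k => A3 j (phi s N) k t) N hN) (le_trans hmain ?_)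
    calc ENNReal.ofReal C * HdotS s (phi s N) ^ 3 ≤ ENNReal.ofReal C * ENNReal.ofReal 8 :=
          mul_le_mul_right hup _
      _ = ENNReal.ofReal (C*8) := (ENNReal.ofReal_mul hC.le).symm
  have hreal : (N:ℝ)^s * ‖A3 j (phi s N) (N:ℤ) t‖ ≤ C*8 :=
    (ENNReal.ofReal_le_ofReal_iff (by positivity)).mp hfinal
  -- lower bound
  have hA3 := A3_norm j s N hN hβne t ht.le
  rw [← hBd] at hA3
  have hcoef : (0:ℝ) ≤ 4*(N:ℝ)^2*((N:ℝ)^(-s))^3/B := by positivity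
  have hX : (4*(N:ℝ)^2*((N:ℝ)^(-s))^3/B) * (t/2)
      ≤ (4*(N:ℝ)^2*((N:ℝ)^(-s))^3/B) * (t - 2/B) :=
    mul_le_mul_of_nonneg_left (by linarith) hcoef
  have hmono : (N:ℝ)^s * ((4*(N:ℝ)^2*((N:ℝ)^(-s))^3/B) * (t/2))
      ≤ (N:ℝ)^s * ‖A3 j (phi s N) (N:ℤ) t‖ :=
    mul_le_mul_of_nonneg_left (hX.trans hA3) (Real.rpow_nonneg hNpos.le _)
  have e3 : ((N:ℝ)^(-s))^3 = (N:ℝ)^(-(3*s)) := by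
    rw [← Real.rpow_natCast ((N:ℝ)^(-s)) 3, ← Real.rpow_mul hNpos.le]
    congr 1
    push_cast
    ring
  have e2 : (N:ℝ)^2 = (N:ℝ)^((2:ℝ)) := by
    rw [← Real.rpow_natCast (N:ℝ) 2]
    norm_num
  have e4 : (N:ℝ)^(2*j+1) = (N:ℝ)^((2*(j:ℝ)+1)) := by
    rw [← Real.rpow_natCast (N:ℝ) (2*j+1)]
    congr 1
    push_cast
    ring
  have key : (N:ℝ)^s * ((N:ℝ)^2 * (N:ℝ)^(-(3*s))) = (N:ℝ)^ε * (N:ℝ)^((2*(j:ℝ)+1)) := by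
    rw [e2, ← Real.rpow_add hNpos, ← Real.rpow_add hNpos, ← Real.rpow_add hNpos, hε']
    congr 1
    ring
  have hX4 : (N:ℝ)^((2*(j:ℝ)+1)) ≠ 0 := by positivity
  have hpow : (N:ℝ)^s * ((4*(N:ℝ)^2*((N:ℝ)^(-s))^3/B) * (t/2)) = (2*t/c) * (N:ℝ)^ε := by
    rw [hBval, e3, e4]
    field_simp
    linear_combination 4 * key
  have hlow2 : (8*C+1) ≤ (2*t/c) * (N:ℝ)^ε := by
    rw [div_le_iff₀ (by positivity)] at hN1
    rw [div_mul_eq_mul_div, le_div_iff₀ hcpos]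
    linarith
  rw [hpow] at hmono
  linarith

end
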